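/- For integers i > j ≥ 2, and any monomial w of length n ≥ i in the free associative algebra over ℚ, one has h^l_i(h^l_j(w)) = h^l_i(w), where h^l_i is extended linearly from monomials to all of the algebra. -/

import Mathlib

noncomputable section

abbrev FA (k : Type*) [Field k] (p : ℕ) := MonoidAlgebra k (FreeMonoid (Fin p))

def mon (k : Type*) [Field k] {p : ℕ} (l : List (Fin p)) : FA k p :=
  MonoidAlgebra.of k (FreeMonoid (Fin p)) (FreeMonoid.ofList l)

def etaRev (k : Type*) [Field k] {p : ℕ} : List (Fin p) → FA k p
  | [] => 0
  | [a] => mon k [a]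
  | a :: b :: l => mon k [a] * etaRev k (b :: l) - etaRev k (b :: l) * mon k [a]

def etaList (k : Type*) [Field k] {p : ℕ} (l : List (Fin p)) : FA k p :=
  etaRev k l.reverse

def etaLin (k : Type*) [Field k] (p : ℕ) : FA k p →ₗ[k] FA k p :=
  Finsupp.lift (FA k p) k (FreeMonoid (Fin p)) (fun w => etaList k (FreeMonoid.toList w)) ∘ₗ
    (MonoidAlgebra.coeffLinearEquiv k : FA k p ≃ₗ[k] (FreeMonoid (Fin p) →₀ k)).toLinearMap

/-- The fold move `h^l_n` on a monomial (word). -/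
def hl (k : Type*) [Field k] {p : ℕ} (n : ℕ) (l : List (Fin p)) : FA k p :=
  if 2 ≤ n ∧ n ≤ l.length then
    ((-1 : k) ^ (n - 1)) •
      (mon k ((l.drop (n - 1)).take 1) * etaList k (l.take (n - 1)) * mon k (l.drop n))
  else mon k l

def hlLin (k : Type*) [Field k] (p n : ℕ) : FA k p →ₗ[k] FA k p :=
  Finsupp.lift (FA k p) k (FreeMonoid (Fin p)) (fun w => hl k n (FreeMonoid.toList w)) ∘ₗ
    (MonoidAlgebra.coeffLinearEquiv k : FA k p ≃ₗ[k] (FreeMonoid (Fin p) →₀ k)).toLinearMap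

/-- The span of the `H^l` relations `h^l_n(w) - w`. -/
def Rspan (k : Type*) [Field k] (p : ℕ) : Submodule k (FA k p) :=
  Submodule.span k
    {x | ∃ (l : List (Fin p)) (n : ℕ), 2 ≤ n ∧ n ≤ l.length ∧ x = hl k n l - mon k l}

namespace HlHlAux

variable {p : ℕ}

lemma mon_mul (l t : List (Fin p)) : mon ℚ l * mon ℚ t = mon ℚ (l ++ t) := by
  simp only [mon, ← map_mul]
  rfl

lemma mon_nil : mon ℚ ([] : List (Fin p)) = 1 := rfl

lemma etaLin_mon (l : List (Fin p)) : etaLin ℚ p (mon ℚ l) = etaList ℚ l := by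
  simp only [etaLin, mon, MonoidAlgebra.of_apply, LinearMap.coe_comp, Function.comp_apply, LinearEquiv.coe_coe, MonoidAlgebra.coeffLinearEquiv_apply, MonoidAlgebra.coeff_single]
  erw [Finsupp.lift_apply, Finsupp.sum_single_index (by rw [zero_smul])]
  rw [one_smul, FreeMonoid.toList_ofList]

lemma hlLin_mon (n : ℕ) (l : List (Fin p)) : hlLin ℚ p n (mon ℚ l) = hl ℚ n l := by
  simp only [hlLin, mon, MonoidAlgebra.of_apply, LinearMap.coe_comp, Function.comp_apply, LinearEquiv.coe_coe, MonoidAlgebra.coeffLinearEquiv_apply, MonoidAlgebra.coeff_single]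
  erw [Finsupp.lift_apply, Finsupp.sum_single_index (by rw [zero_smul])]
  rw [one_smul, FreeMonoid.toList_ofList]

lemma hl_of_le {n : ℕ} {l : List (Fin p)} (h2 : 2 ≤ n) (hn : n ≤ l.length) :
    hl ℚ n l = ((-1 : ℚ) ^ (n - 1)) •
      (mon ℚ ((l.drop (n - 1)).take 1) * etaList ℚ (l.take (n - 1)) * mon ℚ (l.drop n)) := by
  unfold hl
  rw [if_pos ⟨h2, hn⟩]

/-- Span of nonempty monomials. -/
def W1 (p : ℕ) : Submodule ℚ (FA ℚ p) :=
  Submodule.span ℚ {x | ∃ l : List (Fin p), l ≠ [] ∧ x = mon ℚ l}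

/-- Span of monomials of length `m`. -/
def Wlen (p m : ℕ) : Submodule ℚ (FA ℚ p) :=
  Submodule.span ℚ {x | ∃ l : List (Fin p), l.length = m ∧ x = mon ℚ l}

lemma mon_mem_W1 {l : List (Fin p)} (h : l ≠ []) : mon ℚ l ∈ W1 p :=
  Submodule.subset_span ⟨l, h, rfl⟩

lemma W1_mul {x : FA ℚ p} (hx : x ∈ W1 p) (y : FA ℚ p) : x * y ∈ W1 p := by
  induction hx using Submodule.span_induction with
  | mem z hz =>
    obtain ⟨l, hl, rfl⟩ := hz
    induction y using MonoidAlgebra.induction_on with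
    | of g =>
      have : (MonoidAlgebra.of ℚ (FreeMonoid (Fin p))) g = mon ℚ (FreeMonoid.toList g) := rfl
      rw [this, mon_mul]
      exact mon_mem_W1 (by simp [hl])
    | add f g hf hg => rw [mul_add]; exact add_mem hf hg
    | smul r f hf => rw [mul_smul_comm]; exact Submodule.smul_mem _ _ hf
  | zero => rw [zero_mul]; exact zero_mem _
  | add a b _ _ ha hb => rw [add_mul]; exact add_mem ha hb
  | smul r a _ ha => rw [smul_mul_assoc]; exact Submodule.smul_mem _ _ ha

lemma mon_mul_mem_Wlen {m : ℕ} {x : FA ℚ p} (hx : x ∈ Wlen p m) (a : Fin p) :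
    mon ℚ [a] * x ∈ Wlen p (m + 1) := by
  induction hx using Submodule.span_induction with
  | mem z hz =>
    obtain ⟨l, hl, rfl⟩ := hz
    rw [mon_mul]
    exact Submodule.subset_span ⟨a :: l, by simp [hl], rfl⟩
  | zero => rw [mul_zero]; exact zero_mem _
  | add u v _ _ hu hv => rw [mul_add]; exact add_mem hu hv
  | smul r u _ hu => rw [mul_smul_comm]; exact Submodule.smul_mem _ _ hu

lemma mul_mon_mem_Wlen {m : ℕ} {x : FA ℚ p} (hx : x ∈ Wlen p m) (a : Fin p) :
    x * mon ℚ [a] ∈ Wlen p (m + 1) := by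
  induction hx using Submodule.span_induction with
  | mem z hz =>
    obtain ⟨l, hl, rfl⟩ := hz
    rw [mon_mul]
    exact Submodule.subset_span ⟨l ++ [a], by simp [hl], rfl⟩
  | zero => rw [zero_mul]; exact zero_mem _
  | add u v _ _ hu hv => rw [add_mul]; exact add_mem hu hv
  | smul r u _ hu => rw [smul_mul_assoc]; exact Submodule.smul_mem _ _ hu

lemma etaRev_mem_Wlen : ∀ r : List (Fin p), etaRev ℚ r ∈ Wlen p r.length
  | [] => by rw [show etaRev ℚ ([] : List (Fin p)) = 0 from rfl]; exact zero_mem _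
  | [a] => Submodule.subset_span ⟨[a], rfl, rfl⟩
  | a :: b :: l => by
    have ih := etaRev_mem_Wlen (b :: l)
    rw [show etaRev ℚ (a :: b :: l) =
        mon ℚ [a] * etaRev ℚ (b :: l) - etaRev ℚ (b :: l) * mon ℚ [a] from rfl]
    exact sub_mem (mon_mul_mem_Wlen ih a) (mul_mon_mem_Wlen ih a)

lemma etaList_mem_Wlen (l : List (Fin p)) : etaList ℚ l ∈ Wlen p l.length := by
  have := etaRev_mem_Wlen (p := p) l.reverse
  rwa [List.length_reverse] at this

lemma Wlen_le_W1 {m : ℕ} (hm : 1 ≤ m) : Wlen p m ≤ W1 p := by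
  refine Submodule.span_le.2 ?_
  rintro z ⟨l, hl, rfl⟩
  exact Submodule.subset_span ⟨l, by rintro rfl; simp at hl; omega, rfl⟩

lemma etaList_concat {l : List (Fin p)} (h : l ≠ []) (a : Fin p) :
    etaList ℚ (l ++ [a]) = mon ℚ [a] * etaList ℚ l - etaList ℚ l * mon ℚ [a] := by
  obtain ⟨c, l', hl⟩ := List.exists_cons_of_ne_nil (by simpa using h : l.reverse ≠ [])
  have h1 : (l ++ [a]).reverse = a :: c :: l' := by simp [hl]
  simp [etaList, h1, hl, etaRev]

lemma adRule {x : FA ℚ p} (hx : x ∈ W1 p) (a : Fin p) :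
    etaLin ℚ p (x * mon ℚ [a]) =
      mon ℚ [a] * etaLin ℚ p x - etaLin ℚ p x * mon ℚ [a] := by
  induction hx using Submodule.span_induction with
  | mem z hz =>
    obtain ⟨l, hl, rfl⟩ := hz
    rw [mon_mul, etaLin_mon, etaLin_mon, etaList_concat hl]
  | zero => simp
  | add u v _ _ hu hv =>
    rw [add_mul, map_add, hu, hv, map_add, mul_add, add_mul]
    abel
  | smul r u _ hu =>
    rw [smul_mul_assoc, map_smul, hu, map_smul, smul_sub, mul_smul_comm, smul_mul_assoc]

lemma keyR : ∀ (r : List (Fin p)), r ≠ [] → ∀ x ∈ W1 p,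
    etaLin ℚ p (x * etaRev ℚ r) =
      ((-1 : ℚ) ^ (r.length + 1)) •
        (etaRev ℚ r * etaLin ℚ p x - etaLin ℚ p x * etaRev ℚ r) := by
  intro r
  induction r with
  | nil => intro h; exact absurd rfl h
  | cons a r' ih =>
    intro _ x hx
    rcases r' with _ | ⟨b, r''⟩
    · rw [show etaRev ℚ [a] = mon ℚ [a] from rfl, adRule hx a]
      norm_num
    · set r' := b :: r'' with hr'
      have hr'ne : r' ≠ [] := by simp [hr']
      set E' := etaRev ℚ r' with hE'
      have hdef : etaRev ℚ (a :: r') = mon ℚ [a] * E' - E' * mon ℚ [a] := rfl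
      have h1 : etaLin ℚ p ((x * mon ℚ [a]) * E') =
          ((-1 : ℚ) ^ (r'.length + 1)) •
            (E' * etaLin ℚ p (x * mon ℚ [a]) - etaLin ℚ p (x * mon ℚ [a]) * E') :=
        ih hr'ne _ (W1_mul hx _)
      have h2 : etaLin ℚ p (x * E') =
          ((-1 : ℚ) ^ (r'.length + 1)) •
            (E' * etaLin ℚ p x - etaLin ℚ p x * E') := ih hr'ne _ hx
      have h3 : etaLin ℚ p ((x * E') * mon ℚ [a]) =
          mon ℚ [a] * etaLin ℚ p (x * E') - etaLin ℚ p (x * E') * mon ℚ [a] :=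
        adRule (W1_mul hx _) a
      have hx' : etaLin ℚ p (x * mon ℚ [a]) =
          mon ℚ [a] * etaLin ℚ p x - etaLin ℚ p x * mon ℚ [a] := adRule hx a
      have hsplit : x * etaRev ℚ (a :: r') = (x * mon ℚ [a]) * E' - (x * E') * mon ℚ [a] := by
        rw [hdef, mul_sub, ← mul_assoc, ← mul_assoc]
      rw [hsplit, map_sub, h1, h3, h2, hx', hdef]
      rw [show (a :: r').length + 1 = (r'.length + 1) + 1 from by simp, pow_succ,
        mul_smul_comm, smul_mul_assoc, ← smul_sub, ← smul_sub, mul_smul, neg_one_smul]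
      congr 1 <;> noncomm_ring

lemma keyC (u : List (Fin p)) (hu : u ≠ []) (b : Fin p) (s : List (Fin p)) :
    ((-1 : ℚ) ^ u.length) • etaLin ℚ p (mon ℚ [b] * etaList ℚ u * mon ℚ s) =
      etaList ℚ (u ++ [b] ++ s) := by
  induction s using List.reverseRecOn with
  | nil =>
    rw [mon_nil, mul_one, List.append_nil]
    have hrev : u.reverse ≠ [] := by simpa using hu
    have hEb : etaLin ℚ p (mon ℚ [b]) = mon ℚ [b] := by
      rw [etaLin_mon]; simp [etaList, etaRev]
    have h := keyR (p := p) u.reverse hrev (mon ℚ [b]) (mon_mem_W1 (by simp))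
    rw [hEb, List.length_reverse] at h
    have hE : etaList ℚ u = etaRev ℚ u.reverse := rfl
    rw [hE, h, smul_smul, ← pow_add,
      show u.length + (u.length + 1) = 2 * u.length + 1 from by ring,
      pow_succ, pow_mul, neg_one_sq, one_pow, one_mul, neg_one_smul,
      etaList_concat hu b, hE, neg_sub]
  | append_singleton s a ih =>
    have hX : mon ℚ [b] * etaList ℚ u * mon ℚ s ∈ W1 p := by
      rw [mul_assoc]
      exact W1_mul (mon_mem_W1 (by simp)) _
    rw [← mon_mul, ← mul_assoc, adRule hX a, smul_sub, ← mul_smul_comm, ← smul_mul_assoc, ih,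
      ← List.append_assoc, etaList_concat (by simp) a]

lemma hlLin_homog (i m : ℕ) (hi : 2 ≤ i) {x : FA ℚ p} (hx : x ∈ Wlen p m)
    (t : List (Fin p)) (hmi : m < i) (hit : i ≤ m + t.length) :
    hlLin ℚ p i (x * mon ℚ t) =
      ((-1 : ℚ) ^ (i - 1)) •
        (mon ℚ ((t.drop (i - 1 - m)).take 1) *
          etaLin ℚ p (x * mon ℚ (t.take (i - 1 - m))) * mon ℚ (t.drop (i - m))) := by
  induction hx using Submodule.span_induction with
  | mem z hz =>
    obtain ⟨u, hu, rfl⟩ := hz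
    rw [mon_mul, hlLin_mon, mon_mul, etaLin_mon]
    rw [hl_of_le hi (by simp only [List.length_append]; omega)]
    have h1 : (u ++ t).drop (i - 1) = t.drop (i - 1 - m) := by
      have h := List.drop_length_add_append (l₁ := u) (l₂ := t) (i - 1 - m)
      rw [hu, show m + (i - 1 - m) = i - 1 from by omega] at h
      exact h
    have h2 : (u ++ t).take (i - 1) = u ++ t.take (i - 1 - m) := by
      have h := List.take_length_add_append (l₁ := u) (l₂ := t) (i - 1 - m)
      rw [hu, show m + (i - 1 - m) = i - 1 from by omega] at h
      exact h
    have h3 : (u ++ t).drop i = t.drop (i - m) := by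
      have h := List.drop_length_add_append (l₁ := u) (l₂ := t) (i - m)
      rw [hu, show m + (i - m) = i from by omega] at h
      exact h
    rw [h1, h2, h3]
  | zero => simp
  | add u v _ _ hu hv =>
    simp only [add_mul, map_add, hu, hv, mul_add, smul_add]
  | smul r u _ hu =>
    rw [smul_mul_assoc, map_smul, hu, smul_mul_assoc, map_smul, mul_smul_comm, smul_mul_assoc,
      smul_smul, smul_smul, mul_comm r]

end HlHlAux

open HlHlAux in
/-- For i > j ≥ 2 and a monomial w of length ≥ i over ℚ, h^l_i(h^l_j(w)) = h^l_i(w). -/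
theorem hl_hl {p : ℕ} (i j : ℕ) (hj : 2 ≤ j) (hij : j < i)
    (w : List (Fin p)) (hw : i ≤ w.length) :
    hlLin ℚ p i (hl ℚ j w) = hl ℚ i w := by
  have hjw : j ≤ w.length := le_trans (le_of_lt hij) hw
  obtain ⟨c, rst, hcr⟩ : ∃ c rst, w.drop (j - 1) = c :: rst := by
    cases h : w.drop (j - 1) with
    | nil => exfalso; have := congrArg List.length h; simp at this; omega
    | cons c rst => exact ⟨c, rst, rfl⟩
  have htake1 : (w.drop (j - 1)).take 1 = [c] := by rw [hcr]; rfl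
  have hulen : (w.take (j - 1)).length = j - 1 := by
    rw [List.length_take]; omega
  have hune : w.take (j - 1) ≠ [] := by
    intro h; rw [h] at hulen; simp at hulen; omega
  -- the homogeneous degree-j element
  have hx : mon ℚ ((w.drop (j - 1)).take 1) * etaList ℚ (w.take (j - 1)) ∈ Wlen p j := by
    rw [htake1]
    have := mon_mul_mem_Wlen (p := p) (etaList_mem_Wlen (w.take (j - 1))) c
    rwa [hulen, show j - 1 + 1 = j from by omega] at this
  rw [HlHlAux.hl_of_le hj hjw, map_smul]
  rw [hlLin_homog i j (by omega) hx (w.drop j) hij (by rw [List.length_drop]; omega)]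
  have hB : ((w.drop j).drop (i - 1 - j)).take 1 = (w.drop (i - 1)).take 1 := by
    rw [List.drop_drop, show j + (i - 1 - j) = i - 1 from by omega]
  have hT : (w.drop j).drop (i - j) = w.drop i := by
    rw [List.drop_drop, show j + (i - j) = i from by omega]
  rw [hB, hT]
  -- middle factor via keyC
  set s := (w.drop j).take (i - 1 - j) with hs
  have hmid : ((-1 : ℚ) ^ (j - 1)) •
      etaLin ℚ p (mon ℚ ((w.drop (j - 1)).take 1) * etaList ℚ (w.take (j - 1)) * mon ℚ s) =
      etaList ℚ (w.take (i - 1)) := by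
    rw [htake1]
    have := keyC (w.take (j - 1)) hune c s
    rw [hulen] at this
    rw [this]
    congr 1
    have h1 : w.take (j - 1) ++ [c] = w.take j := by
      conv_rhs => rw [show j = (j - 1) + 1 from by omega]
      rw [List.take_add, htake1]
    rw [h1, hs, ← List.take_add, show j + (i - 1 - j) = i - 1 from by omega]
  rw [HlHlAux.hl_of_le (show 2 ≤ i by omega) hw, ← hmid]
  rw [mul_smul_comm, smul_mul_assoc, smul_comm]
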